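/- arXiv:1804.10452 — 2 statements merged into one kernel-verified Lean document; each statement's English description precedes it below -/
import Mathlib

section
/- For x, y ∈ I, n < ω and α < Λ: x R_n^{α+1} y if and only if there exists z ∈ I with x R_n z and z R_n^α y. -/
open Ordinal

noncomputable def e1 (a : Ordinal) : Ordinal := omega0 ^ a - 1

noncomputable def eIter : ℕ → Ordinal → Ordinal
  | 0 => id
  | n + 1 => e1 ∘ eIter n

/-- Ordinal logarithm: exponent of the least term in the Cantor normal form. -/
noncomputable def ell (o : Ordinal) : Ordinal := (Ordinal.CNF omega0 o).getLast?.elim 0 Prod.fst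

/-- Ignatiev (ℓ-)sequences. -/
def IsIgnatiev (x : ℕ → Ordinal) : Prop := ∀ i, x (i + 1) ≤ ell (x i)

/-- The domain of Ignatiev's frame below Λ. -/
def Iset (Λ : Ordinal) : Set (ℕ → Ordinal) := {x | IsIgnatiev x ∧ ∀ i, x i < Λ}

/-- Finitely supported Ignatiev sequences below Λ. -/
def Hset (Λ : Ordinal) : Set (ℕ → Ordinal) := {x | x ∈ Iset Λ ∧ ∃ j, x j = 0}

/-- The accessibility relations. -/
def Rrel (n : ℕ) (x y : ℕ → Ordinal) : Prop :=
  (∀ m ≤ n, y m < x m) ∧ ∀ i, n < i → y i ≤ x i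

/-- Transfinite iterates of the accessibility relation, with witnesses in `D`. -/
noncomputable def Iter (D : Set (ℕ → Ordinal)) (n : ℕ) :
    Ordinal → (ℕ → Ordinal) → (ℕ → Ordinal) → Prop :=
  Ordinal.lt_wf.fix fun α rec x y =>
    if α = 0 then x = y
    else ∀ β, ∀ h : β < α, ∃ z ∈ D, Rrel n x z ∧ rec β h z y

inductive Formula : Type 1 where
  | top : Formula
  | and : Formula → Formula → Formula
  | dia : ℕ → Ordinal → Formula → Formula

def Formula.Bounded (Λ : Ordinal) : Formula → Prop
  | .top => True
  | .and φ ψ => φ.Bounded Λ ∧ ψ.Bounded Λ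
  | .dia _ a φ => a < Λ ∧ φ.Bounded Λ

/-- Forcing over the frame with domain `D`. -/
noncomputable def Forces (D : Set (ℕ → Ordinal)) : (ℕ → Ordinal) → Formula → Prop
  | _, .top => True
  | x, .and φ ψ => Forces D x φ ∧ Forces D x ψ
  | x, .dia n a φ => ∃ y ∈ D, Iter D n a x y ∧ Forces D y φ

/-- Monomial normal forms, coded as lists of (base, exponent) pairs. -/
def MNFc (Λ : Ordinal) (L : List (ℕ × Ordinal)) : Prop :=
  L.Chain' (fun p q => p.1 < q.1) ∧ (∀ p ∈ L, 0 < p.2 ∧ p.2 < Λ) ∧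
    L.Chain' (fun p q => ∃ δ < Λ, p.2 = eIter (q.1 - p.1) q.2 * (2 + δ))

/-- The formula coded by an MNF code. -/
def toFormula : List (ℕ × Ordinal) → Formula
  | [] => .top
  | p :: L => .and (.dia p.1 p.2 .top) (toFormula L)

/-- The projections π of an MNF, i.e. the translated Ignatiev sequence x_ψ. -/
noncomputable def proj : List (ℕ × Ordinal) → ℕ → Ordinal
  | [], _ => 0
  | (n, a) :: L, m => if m ≤ n then eIter (n - m) a else proj L m

lemma Iter_unfold (D : Set (ℕ → Ordinal)) (n : ℕ) (γ : Ordinal) (x y : ℕ → Ordinal) :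
    Iter D n γ x y ↔
      if γ = 0 then x = y
      else ∀ β, β < γ → ∃ z ∈ D, Rrel n x z ∧ Iter D n β z y := by
  rw [Iter, Ordinal.lt_wf.fix_eq]

lemma Rrel_trans {n : ℕ} {x y z : ℕ → Ordinal} (h1 : Rrel n x y) (h2 : Rrel n y z) :
    Rrel n x z :=
  ⟨fun m hm => (h2.1 m hm).trans (h1.1 m hm), fun i hi => (h2.2 i hi).trans (h1.2 i hi)⟩

theorem R_succ_iter (Λ : Ordinal) (hpos : 0 < Λ) (heps : Ordinal.omega0 ^ Λ = Λ)
    (n : ℕ) (α : Ordinal) (hα : α < Λ) (x y : ℕ → Ordinal)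
    (hx : x ∈ Iset Λ) (hy : y ∈ Iset Λ) :
    Iter (Iset Λ) n (α + 1) x y ↔
      ∃ z ∈ Iset Λ, Rrel n x z ∧ Iter (Iset Λ) n α z y := by
  have hne : α + 1 ≠ 0 := Order.succ_ne_bot α
  constructor
  · intro h
    rw [Iter_unfold] at h
    rw [if_neg hne] at h
    exact h α (Order.lt_succ_of_le le_rfl)
  · rintro ⟨z, hzD, hxz, hzy⟩
    rw [Iter_unfold]
    rw [if_neg hne]
    intro β hβ
    rcases lt_or_eq_of_le (Order.lt_succ_iff.mp hβ) with hlt | rfl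
    · have hα0 : α ≠ 0 := fun h => by simp [h] at hlt
      rw [Iter_unfold, if_neg hα0] at hzy
      obtain ⟨w, hwD, hzw, hwy⟩ := hzy β hlt
      exact ⟨w, hwD, Rrel_trans hxz hzw, hwy⟩
    · exact ⟨z, hzD, hxz, hzy⟩
end

section
/- For every finitely supported Ignatiev sequence x ∈ H there is a unique formula ψ in monomial normal form such that the canonical translation x_ψ equals x. Concretely, the map M defined by M(⟨0⟩) = ⊤, M(⟨α,0⟩) = ⟨0^α⟩⊤, and M(⟨α₀,α₁,…⟩) = M(⟨α₁,…⟩) if α₀ = e(α₁), and ⟨0^{α₀}⟩⊤ ∧ M(⟨α₁,…⟩) if α₀ > e(α₁), satisfies x_{M(x)} = x. -/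
open Ordinal

section Helpers

open List

lemma e1_zero : e1 0 = 0 := by simp [e1]

lemma e1_of_pos {a : Ordinal} (h : 0 < a) : e1 a = omega0 ^ a := by
  have hω : omega0 ≤ omega0 ^ a := by
    calc omega0 = omega0 ^ (1 : Ordinal) := (opow_one _).symm
    _ ≤ omega0 ^ a := opow_le_opow_right omega0_pos (Ordinal.one_le_iff_ne_zero.2 h.ne')
  rw [e1]
  conv_lhs => rw [← Ordinal.one_add_of_omega0_le hω]
  rw [Ordinal.add_sub_cancel]

lemma e1_pos {a : Ordinal} (h : 0 < a) : 0 < e1 a := by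
  rw [e1_of_pos h]; exact opow_pos _ omega0_pos

lemma eIter_succ (k : ℕ) (a : Ordinal) : eIter (k + 1) a = e1 (eIter k a) := rfl

lemma eIter_pos (k : ℕ) {a : Ordinal} (h : 0 < a) : 0 < eIter k a := by
  induction k with
  | zero => exact h
  | succ n ih => rw [eIter_succ]; exact e1_pos ih

lemma ell_zero : ell 0 = 0 := by simp [ell]

lemma ell_le_log (c : Ordinal) : ell c ≤ Ordinal.log omega0 c := by
  rw [ell]
  cases h : (Ordinal.CNF omega0 c).getLast? with
  | none => simp
  | some p =>
      simpa using Ordinal.CNF.fst_le_log (List.mem_of_getLast? h)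

lemma CNF_eq_nil_iff {o : Ordinal} : Ordinal.CNF omega0 o = [] ↔ o = 0 := by
  constructor
  · intro h
    have := Ordinal.CNF.foldr omega0 o
    rw [h] at this
    simpa using this.symm
  · rintro rfl; exact Ordinal.CNF.zero_right _

lemma opow_dvd_of_le_ell (c : Ordinal) : ∀ b, b ≤ ell c → omega0 ^ b ∣ c := by
  induction c using Ordinal.induction with
  | h c IHc =>
  intro b hb
  rcases eq_or_ne c 0 with rfl | hc
  · exact dvd_zero _
  set l := Ordinal.log omega0 c with hl
  have hopne : (omega0 : Ordinal) ^ l ≠ 0 := opow_ne_zero _ omega0_ne_zero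
  have hmod : c % omega0 ^ l < omega0 ^ l := Ordinal.mod_lt _ hopne
  have hople : omega0 ^ l ≤ c := Ordinal.opow_log_le_self _ hc
  have hCNF := Ordinal.CNF.ne_zero (b := omega0) hc
  have hsplit : omega0 ^ l * (c / omega0 ^ l) + c % omega0 ^ l = c :=
    Ordinal.div_add_mod _ _
  rcases eq_or_ne (c % omega0 ^ l) 0 with hr | hr
  · have hell : ell c = l := by
      rw [ell, hCNF, hr, Ordinal.CNF.zero_right]
      simp [hl]
    rw [← hsplit, hr, add_zero]
    exact (Ordinal.opow_dvd_opow _ (hb.trans_eq hell)).mul_right _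
  · have hne : Ordinal.CNF omega0 (c % omega0 ^ l) ≠ [] := fun h => hr (CNF_eq_nil_iff.1 h)
    have hell : ell c = ell (c % omega0 ^ l) := by
      rw [ell, hCNF, ell]
      obtain ⟨q, M, hqm⟩ : ∃ q M, Ordinal.CNF omega0 (c % omega0 ^ l) = q :: M :=
        List.exists_cons_of_ne_nil hne
      rw [hqm, List.getLast?_cons_cons]
    rw [hell] at hb
    have hblog : b ≤ l := by
      calc b ≤ ell (c % omega0 ^ l) := hb
      _ ≤ Ordinal.log omega0 (c % omega0 ^ l) := ell_le_log _
      _ ≤ Ordinal.log omega0 c := Ordinal.log_mono_right _ (Ordinal.mod_le _ _)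
    have h1 : omega0 ^ b ∣ omega0 ^ l * (c / omega0 ^ l) :=
      (Ordinal.opow_dvd_opow _ hblog).mul_right _
    have h2 : omega0 ^ b ∣ c % omega0 ^ l :=
      IHc _ (hmod.trans_le hople) b hb
    rw [← hsplit]
    exact dvd_add h1 h2

lemma exists_delta {Λ b c : Ordinal} (hb : 0 < b)
    (hle : b ≤ ell c) (hc0 : c ≠ 0) (hne : c ≠ e1 b) (hcΛ : c < Λ) :
    ∃ δ < Λ, c = e1 b * (2 + δ) := by
  obtain ⟨γ, hγ⟩ := opow_dvd_of_le_ell c b hle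
  rw [e1_of_pos hb] at hne ⊢
  have hγ0 : γ ≠ 0 := by rintro rfl; rw [mul_zero] at hγ; exact hc0 hγ
  have hγ1 : γ ≠ 1 := by rintro rfl; rw [mul_one] at hγ; exact hne hγ
  have h1γ : 1 < γ := lt_of_le_of_ne (Ordinal.one_le_iff_ne_zero.2 hγ0) (Ne.symm hγ1)
  have h2γ : (2 : Ordinal) ≤ γ := by
    have := Order.add_one_le_iff.2 h1γ
    rwa [one_add_one_eq_two] at this
  refine ⟨γ - 2, ?_, ?_⟩
  · calc γ - 2 ≤ γ := Ordinal.sub_le_self _ _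
    _ ≤ omega0 ^ b * γ := Ordinal.le_mul_right _ (opow_pos _ omega0_pos)
    _ = c := hγ.symm
    _ < Λ := hcΛ
  · rw [Ordinal.add_sub_cancel_of_le h2γ, ← hγ]

lemma zero_prop {x : ℕ → Ordinal} (hIg : IsIgnatiev x) {t u : ℕ} (h : t ≤ u)
    (h0 : x t = 0) : x u = 0 := by
  induction u, h using Nat.le_induction with
  | base => exact h0
  | succ n hn ih =>
      have h2 := hIg n
      rw [ih, ell_zero] at h2
      exact nonpos_iff_eq_zero.1 h2

lemma proj_nil (m : ℕ) : proj [] m = 0 := rfl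

lemma proj_cons (n : ℕ) (a : Ordinal) (L : List (ℕ × Ordinal)) (m : ℕ) :
    proj ((n, a) :: L) m = if m ≤ n then eIter (n - m) a else proj L m := rfl

lemma proj_cons_self (n : ℕ) (a : Ordinal) (L : List (ℕ × Ordinal)) :
    proj ((n, a) :: L) n = a := by
  rw [proj_cons, if_pos le_rfl, Nat.sub_self]; rfl

lemma proj_cons_e1 {n m : ℕ} (h : m < n) (a : Ordinal) (L : List (ℕ × Ordinal)) :
    proj ((n, a) :: L) m = e1 (proj ((n, a) :: L) (m + 1)) := by
  rw [proj_cons, proj_cons, if_pos h.le, if_pos (by omega : m + 1 ≤ n)]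
  have hk : n - m = (n - (m + 1)) + 1 := by omega
  rw [hk, eIter_succ]

lemma chain_fst_lt {n : ℕ} {a : ℕ × Ordinal → Prop} : True := trivial

lemma fst_lt_of_chain' {p : ℕ × Ordinal} {T : List (ℕ × Ordinal)}
    (h : List.Chain' (fun p q => p.1 < q.1) (p :: T)) :
    ∀ q ∈ T, p.1 < q.1 := by
  haveI : IsTrans (ℕ × Ordinal) (fun p q : ℕ × Ordinal => p.1 < q.1) :=
    ⟨fun _ _ _ h1 h2 => h1.trans h2⟩
  have := List.isChain_iff_pairwise.1 h
  exact (List.pairwise_cons.1 this).1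

end Helpers

open List in
lemma key_H_to_MNF (Λ : Ordinal) {x : ℕ → Ordinal}
    (hIg : IsIgnatiev x) (hlt : ∀ i, x i < Λ) :
    ∀ d s, x (s + d) = 0 →
      ∃! L : List (ℕ × Ordinal),
        (∀ p ∈ L, s ≤ p.1) ∧ MNFc Λ L ∧ ∀ m, s ≤ m → proj L m = x m := by
  intro d
  induction d using Nat.strong_induction_on with
  | _ d IH =>
  intro s hzero
  by_cases hs : x s = 0
  · have hall : ∀ m, s ≤ m → x m = 0 := fun m hm => zero_prop hIg hm hs
    refine ⟨[], ⟨by simp, ⟨List.isChain_nil, by simp, List.isChain_nil⟩,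
      fun m hm => by rw [proj_nil, hall m hm]⟩, ?_⟩
    rintro L ⟨hidx, hmnf, hproj⟩
    cases L with
    | nil => rfl
    | cons p T =>
        exfalso
        have hmem : p ∈ p :: T := List.mem_cons_self
        have h1 : proj (p :: T) p.1 = p.2 := by
          obtain ⟨n, a⟩ := p; exact proj_cons_self n a T
        have h2 := hproj p.1 (hidx p hmem)
        have h3 := (hmnf.2.1 p hmem).1
        rw [h1, hall p.1 (hidx p hmem)] at h2
        rw [h2] at h3
        exact lt_irrefl _ h3
  · classical
    have hP : ∃ m, x (s + m) ≠ e1 (x (s + m + 1)) := by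
      by_contra hcon
      push_neg at hcon
      have hstep : ∀ j, j ≤ d → x (s + (d - j)) = 0 := by
        intro j
        induction j with
        | zero => intro _; simpa using hzero
        | succ j ihj =>
          intro hj
          have h1 : x (s + (d - j)) = 0 := ihj (by omega)
          have h2 := hcon (d - (j + 1))
          have h3 : s + (d - (j + 1)) + 1 = s + (d - j) := by omega
          rw [h3, h1, e1_zero] at h2
          exact h2
      have := hstep d le_rfl
      simp only [Nat.sub_self, Nat.add_zero] at this
      exact hs this
    set m0 := Nat.find hP with hm0
    set n0 := s + m0 with hn0
    have hidx0 : x n0 ≠ e1 (x (n0 + 1)) := Nat.find_spec hP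
    have hmin : ∀ m, s ≤ m → m < n0 → x m = e1 (x (m + 1)) := by
      intro m hsm hmn
      have h1 := Nat.find_min hP (m := m - s) (by omega)
      have h2 : s + (m - s) = m := by omega
      rw [h2] at h1
      exact not_ne_iff.1 h1
    have hx0 : x n0 ≠ 0 := by
      intro h0
      apply hidx0
      rw [h0, zero_prop hIg (Nat.le_succ _) h0, e1_zero]
    have hx0pos : 0 < x n0 := pos_iff_ne_zero.2 hx0
    have hn0d : n0 < s + d := by
      by_contra hcon
      push_neg at hcon
      exact hx0 (zero_prop hIg hcon hzero)
    have hd' : s + d - (n0 + 1) < d := by omega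
    have hz' : x ((n0 + 1) + (s + d - (n0 + 1))) = 0 := by
      have h3 : (n0 + 1) + (s + d - (n0 + 1)) = s + d := by omega
      rw [h3]; exact hzero
    obtain ⟨L', ⟨hidx', hmnf', hproj'⟩, huniq'⟩ := IH _ hd' (n0 + 1) hz'
    have hiter : ∀ k, k ≤ m0 → x (n0 - k) = eIter k (x n0) := by
      intro k
      induction k with
      | zero => intro _; simp [eIter]
      | succ k ihk =>
        intro hk
        have h1 : x (n0 - k) = eIter k (x n0) := ihk (by omega)
        have h2 : x (n0 - (k + 1)) = e1 (x (n0 - (k + 1) + 1)) :=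
          hmin _ (by omega) (by omega)
        have h3 : n0 - (k + 1) + 1 = n0 - k := by omega
        rw [h2, h3, h1, eIter_succ]
    -- head link condition
    have hhead : ∀ q ∈ L'.head?, ∃ δ < Λ, x n0 = eIter (q.1 - n0) q.2 * (2 + δ) := by
      intro q hq
      obtain ⟨n1, a1⟩ := q
      cases hL' : L' with
      | nil => rw [hL'] at hq; simp at hq
      | cons q0 T' =>
        rw [hL'] at hq
        simp only [List.head?_cons, Option.mem_def, Option.some.injEq] at hq
        subst hq
        have hn1 : n0 + 1 ≤ n1 := hidx' (n1, a1) (by rw [hL']; exact List.mem_cons_self)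
        have ha1pos : 0 < a1 := (hmnf'.2.1 (n1, a1) (by rw [hL']; exact List.mem_cons_self)).1
        have hb : x (n0 + 1) = eIter (n1 - (n0 + 1)) a1 := by
          have := hproj' (n0 + 1) le_rfl
          rw [hL', proj_cons, if_pos hn1] at this
          exact this.symm
        have hbpos : 0 < x (n0 + 1) := by rw [hb]; exact eIter_pos _ ha1pos
        have hwe : e1 (x (n0 + 1)) = eIter (n1 - n0) a1 := by
          have h4 : n1 - n0 = (n1 - (n0 + 1)) + 1 := by omega
          rw [h4, eIter_succ, hb]
        obtain ⟨δ, hδΛ, hδ⟩ := exists_delta (Λ := Λ) hbpos (hIg n0) hx0 hidx0 (hlt n0)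
        exact ⟨δ, hδΛ, by rw [hδ, hwe]⟩
    set L : List (ℕ × Ordinal) := (n0, x n0) :: L' with hL
    have hLidx : ∀ p ∈ L, s ≤ p.1 := by
      intro p hp
      rcases List.mem_cons.1 hp with rfl | hp
      · exact Nat.le_add_right _ _
      · exact (Nat.le_add_right s m0).trans ((Nat.le_succ n0).trans (hidx' p hp))
    have hLmnf : MNFc Λ L := by
      refine ⟨?_, ?_, ?_⟩
      · rw [hL, List.Chain', List.isChain_cons]
        refine ⟨fun q hq => ?_, hmnf'.1⟩
        have := hidx' q (List.mem_of_mem_head? hq)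
        omega
      · intro p hp
        rcases List.mem_cons.1 hp with rfl | hp
        · exact ⟨hx0pos, hlt n0⟩
        · exact hmnf'.2.1 p hp
      · rw [hL, List.Chain', List.isChain_cons]
        exact ⟨hhead, hmnf'.2.2⟩
    have hLproj : ∀ m, s ≤ m → proj L m = x m := by
      intro m hm
      rw [hL, proj_cons]
      by_cases hmn : m ≤ n0
      · rw [if_pos hmn]
        have h1 : x (n0 - (n0 - m)) = eIter (n0 - m) (x n0) := hiter _ (by omega)
        have h2 : n0 - (n0 - m) = m := by omega
        rw [h2] at h1
        exact h1.symm
      · rw [if_neg hmn]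
        exact hproj' m (by omega)
    refine ⟨L, ⟨hLidx, hLmnf, hLproj⟩, ?_⟩
    rintro L₂ ⟨hidx2, hmnf2, hproj2⟩
    cases L₂ with
    | nil =>
        exfalso
        have := hproj2 s le_rfl
        rw [proj_nil] at this
        exact hs this.symm
    | cons p T =>
        obtain ⟨n, a⟩ := p
        have hmem : (n, a) ∈ (n, a) :: T := List.mem_cons_self
        have hns : s ≤ n := hidx2 _ hmem
        have hxn : x n = a := by
          have := hproj2 n hns
          rw [proj_cons_self] at this
          exact this.symm
        have hbelow : ∀ m, s ≤ m → m < n → x m = e1 (x (m + 1)) := by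
          intro m hsm hmn
          have h1 := hproj2 m hsm
          have h2 := hproj2 (m + 1) (by omega)
          rw [← h1, ← h2]
          exact proj_cons_e1 hmn a T
        have hxn1 : x (n + 1) = proj T (n + 1) := by
          have := hproj2 (n + 1) (by omega)
          rw [proj_cons, if_neg (by omega)] at this
          exact this.symm
        have hidxn : x n ≠ e1 (x (n + 1)) := by
          cases hT : T with
          | nil =>
              rw [hxn1, hT, proj_nil, e1_zero, hxn]
              exact fun h => (hmnf2.2.1 _ hmem).1.ne' h
          | cons q T' =>
              obtain ⟨n1, a1⟩ := q
              have hchain := hmnf2.2.2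
              rw [hT, List.Chain', List.isChain_cons_cons] at hchain
              obtain ⟨⟨δ, hδΛ, hδ0⟩, _⟩ := hchain
              have hδ : a = eIter (n1 - n) a1 * (2 + δ) := hδ0
              have hfst := hmnf2.1
              rw [hT, List.Chain', List.isChain_cons_cons] at hfst
              have hn1 : n < n1 := hfst.1
              have ha1pos : 0 < a1 := by
                refine (hmnf2.2.1 (n1, a1) ?_).1
                rw [hT]; exact List.mem_cons_of_mem _ List.mem_cons_self
              have hb : x (n + 1) = eIter (n1 - (n + 1)) a1 := by
                rw [hxn1, hT, proj_cons, if_pos (by omega)]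
              have hbpos : 0 < x (n + 1) := by rw [hb]; exact eIter_pos _ ha1pos
              have hwe : e1 (x (n + 1)) = eIter (n1 - n) a1 := by
                have h4 : n1 - n = (n1 - (n + 1)) + 1 := by omega
                rw [h4, eIter_succ, hb]
              have hwpos : 0 < e1 (x (n + 1)) := e1_pos hbpos
              rw [hxn, hδ, ← hwe]
              intro heq
              have h5 : e1 (x (n + 1)) * 2 ≤ e1 (x (n + 1)) * (2 + δ) :=
                mul_le_mul_right le_self_add _
              have h6 : e1 (x (n + 1)) * 1 < e1 (x (n + 1)) * 2 :=
                mul_lt_mul_of_pos_left one_lt_two hwpos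
              rw [mul_one] at h6
              have := h6.trans_le h5
              rw [heq] at this
              exact lt_irrefl _ this
        have hfind : n - s = m0 := by
          have hle1 : m0 ≤ n - s := by
            apply Nat.find_min' hP
            have h7 : s + (n - s) = n := by omega
            rw [h7]
            exact hidxn
          have hle2 : ¬ m0 < n - s := by
            intro hcon
            apply hidx0
            exact hbelow n0 (by omega) (by omega)
          omega
        have hnn0 : n = n0 := by omega
        subst hnn0
        have hTidx : ∀ p ∈ T, n0 + 1 ≤ p.1 := by
          intro p hp
          exact fst_lt_of_chain' hmnf2.1 p hp
        have hTmnf : MNFc Λ T :=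
          ⟨(List.isChain_cons.1 hmnf2.1).2,
           fun p hp => hmnf2.2.1 p (List.mem_cons_of_mem _ hp),
           (List.isChain_cons.1 hmnf2.2.2).2⟩
        have hTproj : ∀ m, n0 + 1 ≤ m → proj T m = x m := by
          intro m hm
          have := hproj2 m (by omega)
          rw [proj_cons, if_neg (by omega)] at this
          exact this
        have hTeq := huniq' T ⟨hTidx, hTmnf, hTproj⟩
        rw [hL, ← hxn, hTeq]

theorem H_to_MNF (Λ : Ordinal) (hpos : 0 < Λ) (heps : Ordinal.omega0 ^ Λ = Λ)
    (x : ℕ → Ordinal) (hx : x ∈ Hset Λ) :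
    ∃! L : List (ℕ × Ordinal), MNFc Λ L ∧ proj L = x := by
  obtain ⟨⟨hIg, hlt⟩, j, hj⟩ := hx
  have hj0 : x (0 + j) = 0 := by simpa using hj
  obtain ⟨L, ⟨hidx, hmnf, hproj⟩, huniq⟩ := key_H_to_MNF Λ hIg hlt j 0 hj0
  refine ⟨L, ⟨hmnf, funext fun m => hproj m (Nat.zero_le m)⟩, ?_⟩
  rintro L₂ ⟨hmnf2, hproj2⟩
  exact huniq L₂ ⟨fun p _ => Nat.zero_le _, hmnf2, fun m _ => by rw [hproj2]⟩
end
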